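/- Let G be a finite simple graph that is C_3-free, C_5-free and C_6-free, let R be a minimal redundant set of G, and let x ∈ red(R) be such that |red(R) ∩ N(x)| = 2. Then |R| = 3. -/

import Mathlib

open Set SimpleGraph

variable {V : Type*}

/-- The closed neighborhood `N[v]` of a vertex. -/
def closedNbr (G : SimpleGraph V) (v : V) : Set V := insert v (G.neighborSet v)

/-- Private neighbors of `x` with respect to `I`. -/
def privSet (G : SimpleGraph V) (x : V) (I : Set V) : Set V :=
  {y ∈ closedNbr G x | closedNbr G y ∩ I = {x}}

/-- A set is irredundant if every element has a private neighbor. -/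
def Irred (G : SimpleGraph V) (I : Set V) : Prop := ∀ x ∈ I, (privSet G x I).Nonempty

/-- A maximal irredundant set. -/
def MaxIrred (G : SimpleGraph V) (I : Set V) : Prop :=
  Irred G I ∧ ∀ J : Set V, Irred G J → I ⊆ J → J = I

def Redundant (G : SimpleGraph V) (R : Set V) : Prop := ¬ Irred G R

def MinRedundant (G : SimpleGraph V) (R : Set V) : Prop :=
  Redundant G R ∧ ∀ S : Set V, S ⊂ R → ¬ Redundant G S

/-- The set of redundant vertices of a set. -/
def redVerts (G : SimpleGraph V) (R : Set V) : Set V := {x ∈ R | privSet G x R = ∅}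

def Dominating (G : SimpleGraph V) (D : Set V) : Prop := ∀ v : V, ∃ d ∈ D, v ∈ closedNbr G d

def MinDominating (G : SimpleGraph V) (D : Set V) : Prop :=
  Dominating G D ∧ ∀ S : Set V, S ⊂ D → ¬ Dominating G S

/-- Vertices at distance at most 2 from `x`. -/
def ball2 (G : SimpleGraph V) (x : V) : Set V :=
  {y | y = x ∨ G.Adj x y ∨ ∃ w, G.Adj x w ∧ G.Adj w y}

/-- Vertices at distance exactly 2 from `x`. -/
def sphere2 (G : SimpleGraph V) (x : V) : Set V :=
  {y | y ≠ x ∧ ¬ G.Adj x y ∧ ∃ w, G.Adj x w ∧ G.Adj w y}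

/-- `G` contains no induced cycle of length `k`. -/
def CFree (G : SimpleGraph V) (k : ℕ) : Prop :=
  IsEmpty (SimpleGraph.cycleGraph k ↪g G)

/-- `S` dominates `B` through open neighborhoods. -/
def DomOver (G : SimpleGraph V) (S B : Set V) : Prop := ∀ b ∈ B, ∃ s ∈ S, G.Adj s b

def MinDomOver (G : SimpleGraph V) (S B : Set V) : Prop :=
  DomOver G S B ∧ ∀ S' : Set V, S' ⊂ S → ¬ DomOver G S' B

/-- `N(Y)`, the union of open neighborhoods of elements of `Y`. -/
def nbrUnion (G : SimpleGraph V) (Y : Set V) : Set V := ⋃ y ∈ Y, G.neighborSet y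

/-- Private edges of `x` with respect to `I` in a hypergraph. -/
def hypPriv (H : Set (Set V)) (x : V) (I : Set V) : Set (Set V) := {E ∈ H | E ∩ I = {x}}

def HypIrred (H : Set (Set V)) (I : Set V) : Prop := ∀ x ∈ I, (hypPriv H x I).Nonempty

def HypMaxIrred (H : Set (Set V)) (I : Set V) : Prop :=
  HypIrred H I ∧ ∀ J : Set V, HypIrred H J → I ⊆ J → J = I

/-- The trace of a hypergraph on a set `S`. -/
def htrace (H : Set (Set V)) (S : Set V) : Set (Set V) :=
  {F | ∃ E ∈ H, F = E ∩ S ∧ (E ∩ S).Nonempty}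

/-- The closed-neighborhood hypergraph of a graph. -/
def nbrHyp (G : SimpleGraph V) : Set (Set V) := Set.range (closedNbr G)

/-- The first `i` vertices in the ordering `v` (zero-based: `v 0, …, v (i-1)`). -/
def firstVerts (v : ℕ → V) (i : ℕ) : Set V := {x | ∃ j < i, v j = x}

/-- The incidence co-bipartite graph of the closed-neighborhood hypergraph of `G`:
`Sum.inl` is the vertex side `V`, `Sum.inr` is the copy `U`. -/
def cobip (G : SimpleGraph V) : SimpleGraph (V ⊕ V) :=
  SimpleGraph.fromRel (fun a b => match a, b with
    | Sum.inl _, Sum.inl _ => True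
    | Sum.inr _, Sum.inr _ => True
    | Sum.inl a, Sum.inr b => a = b ∨ G.Adj a b
    | Sum.inr _, Sum.inl _ => False)

lemma mem_closedNbr {G : SimpleGraph V} {v y : V} :
    y ∈ closedNbr G v ↔ y = v ∨ G.Adj v y := by
  simp [closedNbr]

lemma noC3 {G : SimpleGraph V} (h : CFree G 3) {a b c : V}
    (hab : G.Adj a b) (hbc : G.Adj b c) (hca : G.Adj c a) : False := by
  apply h.false
  refine ⟨⟨![a,b,c], ?_⟩, ?_⟩
  · intro i j hij
    fin_cases i <;> fin_cases j <;> simp_all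
  · intro i j
    show G.Adj (![a,b,c] i) (![a,b,c] j) ↔ _
    fin_cases i <;> fin_cases j <;>
      simp [cycleGraph_adj, hab, hbc, hca, hab.symm, hbc.symm, hca.symm] <;> decide

set_option maxHeartbeats 3200000 in
lemma noC6 {G : SimpleGraph V} (h : CFree G 6) {a b c d e f : V}
    (h1 : G.Adj a b) (h2 : G.Adj b c) (h3 : G.Adj c d) (h4 : G.Adj d e) (h5 : G.Adj e f)
    (h6 : G.Adj f a)
    (n1 : ¬ G.Adj a c) (n2 : ¬ G.Adj a d) (n3 : ¬ G.Adj a e) (n4 : ¬ G.Adj b d)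
    (n5 : ¬ G.Adj b e) (n6 : ¬ G.Adj b f) (n7 : ¬ G.Adj c e) (n8 : ¬ G.Adj c f)
    (n9 : ¬ G.Adj d f)
    (e1 : a ≠ c) (e2 : a ≠ d) (e3 : a ≠ e) (e4 : b ≠ d) (e5 : b ≠ e) (e6 : b ≠ f)
    (e7 : c ≠ e) (e8 : c ≠ f) (e9 : d ≠ f) : False := by
  apply h.false
  refine ⟨⟨![a,b,c,d,e,f], ?_⟩, ?_⟩
  · intro i j hij
    fin_cases i <;> fin_cases j <;> first
      | rfl
      | exact absurd hij h1.ne | exact absurd hij h1.ne' | exact absurd hij h2.ne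
      | exact absurd hij h2.ne' | exact absurd hij h3.ne | exact absurd hij h3.ne'
      | exact absurd hij h4.ne | exact absurd hij h4.ne' | exact absurd hij h5.ne
      | exact absurd hij h5.ne' | exact absurd hij h6.ne | exact absurd hij h6.ne'
      | exact absurd hij e1 | exact absurd hij e1.symm
      | exact absurd hij e2 | exact absurd hij e2.symm | exact absurd hij e3
      | exact absurd hij e3.symm | exact absurd hij e4 | exact absurd hij e4.symm
      | exact absurd hij e5 | exact absurd hij e5.symm | exact absurd hij e6
      | exact absurd hij e6.symm | exact absurd hij e7 | exact absurd hij e7.symm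
      | exact absurd hij e8 | exact absurd hij e8.symm | exact absurd hij e9
      | exact absurd hij e9.symm
  · intro i j
    fin_cases i <;> fin_cases j <;> first
      | exact iff_of_false (fun h' => G.ne_of_adj h' rfl) (by decide)
      | exact iff_of_true h1 (by decide) | exact iff_of_true h1.symm (by decide)
      | exact iff_of_true h2 (by decide) | exact iff_of_true h2.symm (by decide)
      | exact iff_of_true h3 (by decide) | exact iff_of_true h3.symm (by decide)
      | exact iff_of_true h4 (by decide) | exact iff_of_true h4.symm (by decide)
      | exact iff_of_true h5 (by decide) | exact iff_of_true h5.symm (by decide)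
      | exact iff_of_true h6 (by decide) | exact iff_of_true h6.symm (by decide)
      | exact iff_of_false n1 (by decide) | exact iff_of_false (fun h' => n1 h'.symm) (by decide)
      | exact iff_of_false n2 (by decide) | exact iff_of_false (fun h' => n2 h'.symm) (by decide)
      | exact iff_of_false n3 (by decide) | exact iff_of_false (fun h' => n3 h'.symm) (by decide)
      | exact iff_of_false n4 (by decide) | exact iff_of_false (fun h' => n4 h'.symm) (by decide)
      | exact iff_of_false n5 (by decide) | exact iff_of_false (fun h' => n5 h'.symm) (by decide)
      | exact iff_of_false n6 (by decide) | exact iff_of_false (fun h' => n6 h'.symm) (by decide)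
      | exact iff_of_false n7 (by decide) | exact iff_of_false (fun h' => n7 h'.symm) (by decide)
      | exact iff_of_false n8 (by decide) | exact iff_of_false (fun h' => n8 h'.symm) (by decide)
      | exact iff_of_false n9 (by decide) | exact iff_of_false (fun h' => n9 h'.symm) (by decide)

lemma key {G : SimpleGraph V} {R : Set V} (hR : MinRedundant G R) {z t : V}
    (hzR : z ∈ R) (hzp : privSet G z R = ∅) (ht : t ∈ R) (hne : z ≠ t) :
    ∃ y, y ∈ closedNbr G z ∧ closedNbr G y ∩ R = {z, t} := by
  have hsub : R \ {t} ⊂ R := Set.sdiff_singleton_ssubset.mpr ht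
  have hirr : Irred G (R \ {t}) := not_not.mp (hR.2 _ hsub)
  obtain ⟨y, hy1, hy2⟩ := hirr z ⟨hzR, by simpa using hne⟩
  have hzy : z ∈ closedNbr G y := by
    have : z ∈ closedNbr G y ∩ (R \ {t}) := by rw [hy2]; rfl
    exact this.1
  have hne' : closedNbr G y ∩ R ≠ {z} := by
    intro hcon
    exact (Set.eq_empty_iff_forall_notMem.mp hzp y) ⟨hy1, hcon⟩
  have hty : t ∈ closedNbr G y := by
    by_contra hty
    apply hne'
    ext w
    constructor
    · rintro ⟨hw1, hw2⟩
      have : w ∈ closedNbr G y ∩ (R \ {t}) :=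
        ⟨hw1, hw2, by intro h; exact hty ((Set.mem_singleton_iff.mp h) ▸ hw1)⟩
      rw [hy2] at this; exact this
    · intro hw
      rw [Set.mem_singleton_iff] at hw; subst hw
      exact ⟨hzy, hzR⟩
  refine ⟨y, hy1, ?_⟩
  ext w
  constructor
  · rintro ⟨hw1, hw2⟩
    by_cases hwt : w = t
    · right; exact hwt
    · have : w ∈ closedNbr G y ∩ (R \ {t}) := ⟨hw1, hw2, by simpa using hwt⟩
      rw [hy2] at this; left; exact this
  · rintro (hw | hw)
    · subst hw; exact ⟨hzy, hzR⟩
    · rw [Set.mem_singleton_iff] at hw; subst hw; exact ⟨hty, ht⟩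

/-- in a `(C₃, C₅, C₆)`-free graph, if `R` is a minimal redundant set,
`x ∈ red(R)`, and `|red(R) ∩ N(x)| = 2`, then `|R| = 3`. -/
theorem stmt13 [Fintype V] (G : SimpleGraph V) (h3 : CFree G 3) (h5 : CFree G 5)
    (h6 : CFree G 6) (R : Set V) (hR : MinRedundant G R) (x : V) (hx : x ∈ redVerts G R)
    (htwo : (redVerts G R ∩ G.neighborSet x).ncard = 2) :
    R.ncard = 3 := by
  obtain ⟨hxR, hxp⟩ := hx
  obtain ⟨a, b, hab, hS⟩ := Set.ncard_eq_two.mp htwo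
  have haS : a ∈ redVerts G R ∩ G.neighborSet x := by rw [hS]; exact Or.inl rfl
  have hbS : b ∈ redVerts G R ∩ G.neighborSet x := by rw [hS]; exact Or.inr rfl
  obtain ⟨⟨haR, hap⟩, hxa'⟩ := haS
  obtain ⟨⟨hbR, hbp⟩, hxb'⟩ := hbS
  have hxa : G.Adj x a := hxa'
  have hxb : G.Adj x b := hxb'
  have mem2 : ∀ {u p q r : V}, closedNbr G u ∩ R = {p, q} → r ∈ closedNbr G u → r ∈ R →
      r = p ∨ r = q := by
    intro u p q r h hcn hr
    have : r ∈ ({p, q} : Set V) := by rw [← h]; exact ⟨hcn, hr⟩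
    simpa using this
  have fst2 : ∀ {u p q : V}, closedNbr G u ∩ R = {p, q} → p ∈ closedNbr G u := by
    intro u p q h
    have : p ∈ closedNbr G u ∩ R := by rw [h]; exact Or.inl rfl
    exact this.1
  have snd2 : ∀ {u p q : V}, closedNbr G u ∩ R = {p, q} → q ∈ closedNbr G u := by
    intro u p q h
    have : q ∈ closedNbr G u ∩ R := by rw [h]; exact Or.inr rfl
    exact this.1
  have hself : ∀ u : V, u ∈ closedNbr G u := fun u => mem_closedNbr.mpr (Or.inl rfl)
  have hnab : ¬ G.Adj a b := fun h => noC3 h3 hxa h hxb.symm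
  -- N[a] ∩ R = {x, a}
  have NaR : closedNbr G a ∩ R = {x, a} := by
    obtain ⟨y, hy1, hy2⟩ := key hR hxR hxp haR hxa.ne
    rcases mem_closedNbr.mp hy1 with rfl | hxy
    · exfalso
      rcases mem2 hy2 (mem_closedNbr.mpr (Or.inr hxb)) hbR with h | h
      · exact hxb.ne' h
      · exact hab h.symm
    · have hay : a ∈ closedNbr G y := snd2 hy2
      rcases mem_closedNbr.mp hay with rfl | hya
      · exact hy2
      · exact absurd hya (fun h => noC3 h3 hxy h hxa.symm)
  have NbR : closedNbr G b ∩ R = {x, b} := by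
    obtain ⟨y, hy1, hy2⟩ := key hR hxR hxp hbR hxb.ne
    rcases mem_closedNbr.mp hy1 with rfl | hxy
    · exfalso
      rcases mem2 hy2 (mem_closedNbr.mpr (Or.inr hxa)) haR with h | h
      · exact hxa.ne' h
      · exact hab h
    · have hby : b ∈ closedNbr G y := snd2 hy2
      rcases mem_closedNbr.mp hby with rfl | hyb
      · exact hy2
      · exact absurd hyb (fun h => noC3 h3 hxy h hxb.symm)
  -- the vertex w with N[w] ∩ R = {a, b}
  obtain ⟨w, hw1, hw2⟩ := key hR haR hap hbR hab
  have hwnR : w ∉ R := by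
    intro hwR
    rcases mem2 hw2 (hself w) hwR with rfl | h
    · rcases mem2 hw2 (mem_closedNbr.mpr (Or.inr hxa.symm)) hxR with h | h
      · exact hxa.ne h
      · exact hxb.ne h
    · subst h
      rcases mem2 NbR (fst2 hw2) haR with h | h
      · exact hxa.ne h.symm
      · exact hab h
  have hAaw : G.Adj a w := by
    rcases mem_closedNbr.mp hw1 with rfl | h
    · exact absurd haR hwnR
    · exact h
  have hAwb : G.Adj w b := by
    rcases mem_closedNbr.mp (snd2 hw2) with rfl | h
    · exact absurd hbR hwnR
    · exact h
  -- R ⊆ {x, a, b}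
  have hRsub : R ⊆ {x, a, b} := by
    intro c hcR
    by_contra hc
    simp only [Set.mem_insert_iff, Set.mem_singleton_iff, not_or] at hc
    obtain ⟨hcx, hca, hcb⟩ := hc
    obtain ⟨u, hu1, hu2⟩ := key hR haR hap hcR (Ne.symm hca)
    obtain ⟨v, hv1, hv2⟩ := key hR hbR hbp hcR (Ne.symm hcb)
    have hnwc : c ∉ closedNbr G w := by
      intro h
      rcases mem2 hw2 h hcR with h' | h'
      · exact hca h'
      · exact hcb h'
    have hwnc : w ≠ c := fun h => hnwc (h ▸ hself w)
    have hAwc : ¬ G.Adj w c := fun h => hnwc (mem_closedNbr.mpr (Or.inr h))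
    have hnacAdj : ¬ G.Adj a c := by
      intro h
      rcases mem2 NaR (mem_closedNbr.mpr (Or.inr h)) hcR with h' | h'
      · exact hcx h'
      · exact hca h'
    have hnbcAdj : ¬ G.Adj b c := by
      intro h
      rcases mem2 NbR (mem_closedNbr.mpr (Or.inr h)) hcR with h' | h'
      · exact hcx h'
      · exact hcb h'
    by_cases huc : u = c
    ·
      subst huc
      rcases mem_closedNbr.mp hu1 with h | h
      · exact hca h
      · exact hnacAdj h
    · by_cases hvc : v = c
      · subst hvc
        rcases mem_closedNbr.mp hv1 with h | h
        · exact hcb h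
        · exact hnbcAdj h
      · -- main case: build the 6-cycle w a u c v b
        have hunR : u ∉ R := by
          intro h
          rcases mem2 hu2 (hself u) h with rfl | h'
          · rcases mem2 NaR (snd2 hu2) hcR with h' | h'
            · exact hcx h'
            · exact hca h'
          · exact huc h'
        have hvnR : v ∉ R := by
          intro h
          rcases mem2 hv2 (hself v) h with rfl | h'
          · rcases mem2 NbR (snd2 hv2) hcR with h' | h'
            · exact hcx h'
            · exact hcb h'
          · exact hvc h'
        have hAau : G.Adj a u := by
          rcases mem_closedNbr.mp hu1 with rfl | h
          · exact absurd haR hunR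
          · exact h
        have hAuc : G.Adj u c := by
          rcases mem_closedNbr.mp (snd2 hu2) with rfl | h
          · exact absurd rfl huc
          · exact h
        have hAbv : G.Adj b v := by
          rcases mem_closedNbr.mp hv1 with rfl | h
          · exact absurd hbR hvnR
          · exact h
        have hAvc : G.Adj v c := by
          rcases mem_closedNbr.mp (snd2 hv2) with rfl | h
          · exact absurd rfl hvc
          · exact h
        have hnub : b ∉ closedNbr G u := by
          intro h
          rcases mem2 hu2 h hbR with h' | h'
          · exact hab h'.symm
          · exact hcb h'.symm
        have hnva : a ∉ closedNbr G v := by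
          intro h
          rcases mem2 hv2 h haR with h' | h'
          · exact hab h'
          · exact hca h'.symm
        have hwu : w ≠ u := by
          intro h; subst h
          rcases mem2 hu2 (snd2 hw2) hbR with h' | h'
          · exact hab h'.symm
          · exact hcb h'.symm
        have hwv : w ≠ v := by
          intro h; subst h
          rcases mem2 hv2 (fst2 hw2) haR with h' | h'
          · exact hab h'
          · exact hca h'.symm
        have huv : u ≠ v := by
          intro h; subst h
          rcases mem2 hv2 (fst2 hu2) haR with h' | h'
          · exact hab h'
          · exact hca h'.symm
        exact noC6 h6 hAaw.symm hAau hAuc hAvc.symm hAbv.symm hAwb.symm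
          (fun h => noC3 h3 hAaw h hAau.symm)
          hAwc
          (fun h => noC3 h3 h hAbv.symm hAwb.symm)
          hnacAdj
          (fun h => hnva (mem_closedNbr.mpr (Or.inr h.symm)))
          hnab
          (fun h => noC3 h3 h hAvc hAuc.symm)
          (fun h => hnub (mem_closedNbr.mpr (Or.inr h)))
          (fun h => hnbcAdj h.symm)
          hwu hwnc hwv (Ne.symm hca) (fun h => hvnR (h ▸ haR)) hab
          huv (fun h => hunR (h ▸ hbR)) hcb
  have hReq : R = {x, a, b} := by
    apply Set.Subset.antisymm hRsub
    intro y hy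
    rcases hy with rfl | hy
    · exact hxR
    · rcases hy with rfl | hy
      · exact haR
      · rw [Set.mem_singleton_iff] at hy; subst hy; exact hbR
  rw [hReq]
  exact Set.ncard_eq_three.mpr ⟨x, a, b, hxa.ne, hxb.ne, hab, rfl⟩
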